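/- Let X be a positive real number. Then Σ_{d ≤ X} μ(d)·⌊X/d⌋² = (6/π²)X² + O(X log X) as X → ∞; equivalently, the number of pairs (p,q) of coprime positive integers with p, q ≤ X equals X²/ζ(2) + O(X log X). -/

import Mathlib

open Finset ArithmeticFunction

lemma moebius_sum_divisors (n : ℕ)  :
    ∑ d ∈ n.divisors, (moebius d : ℤ) = if n = 1 then 1 else 0 := by
  have h := congrArg (fun f : ArithmeticFunction ℤ => f n) moebius_mul_coe_zeta
  simp only [coe_mul_zeta_apply, one_apply] at h
  simpa using h

lemma cp_ident (N : ℕ) :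
    ((((Finset.Icc 1 N) ×ˢ (Finset.Icc 1 N)).filter
        (fun pq => Nat.gcd pq.1 pq.2 = 1)).card : ℤ)
      = ∑ d ∈ Finset.Icc 1 N, (moebius d) * ((N / d : ℕ) : ℤ) ^ 2 := by
  have key : ∀ pq ∈ (Finset.Icc 1 N) ×ˢ (Finset.Icc 1 N),
      (if Nat.gcd pq.1 pq.2 = 1 then (1:ℤ) else 0)
        = ∑ d ∈ Finset.Icc 1 N, (if d ∣ pq.1 ∧ d ∣ pq.2 then (moebius d : ℤ) else 0) := by
    rintro ⟨p, q⟩ hpq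
    simp only [mem_product, mem_Icc] at hpq
    obtain ⟨⟨hp1, hpN⟩, ⟨hq1, hqN⟩⟩ := hpq
    have hg0 : Nat.gcd p q ≠ 0 := Nat.gcd_ne_zero_left (by omega)
    have hset : (Finset.Icc 1 N).filter (fun d => d ∣ p ∧ d ∣ q) = (Nat.gcd p q).divisors := by
      ext d
      simp only [mem_filter, mem_Icc, Nat.mem_divisors, Nat.dvd_gcd_iff]
      constructor
      · rintro ⟨⟨h1, h2⟩, h3⟩; exact ⟨h3, hg0⟩
      · rintro ⟨⟨h1, h2⟩, _⟩
        refine ⟨⟨?_, ?_⟩, h1, h2⟩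
        · exact Nat.one_le_iff_ne_zero.mpr (fun h => by simp [h] at h1; omega)
        · exact le_trans (Nat.le_of_dvd (by omega) h1) hpN
    rw [← Finset.sum_filter, hset, moebius_sum_divisors]
  calc ((((Finset.Icc 1 N) ×ˢ (Finset.Icc 1 N)).filter
        (fun pq => Nat.gcd pq.1 pq.2 = 1)).card : ℤ)
      = ∑ pq ∈ (Finset.Icc 1 N) ×ˢ (Finset.Icc 1 N),
          (if Nat.gcd pq.1 pq.2 = 1 then (1:ℤ) else 0) := by
        rw [Finset.card_filter]; push_cast; rfl
    _ = ∑ pq ∈ (Finset.Icc 1 N) ×ˢ (Finset.Icc 1 N), ∑ d ∈ Finset.Icc 1 N,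
          (if d ∣ pq.1 ∧ d ∣ pq.2 then (moebius d : ℤ) else 0) := Finset.sum_congr rfl key
    _ = ∑ d ∈ Finset.Icc 1 N, ∑ pq ∈ (Finset.Icc 1 N) ×ˢ (Finset.Icc 1 N),
          (if d ∣ pq.1 ∧ d ∣ pq.2 then (moebius d : ℤ) else 0) := Finset.sum_comm
    _ = ∑ d ∈ Finset.Icc 1 N, (moebius d) * ((N / d : ℕ) : ℤ) ^ 2 := by
        refine Finset.sum_congr rfl fun d _ => ?_
        rw [← Finset.sum_filter]
        have : ((Finset.Icc 1 N) ×ˢ (Finset.Icc 1 N)).filter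
            (fun pq => d ∣ pq.1 ∧ d ∣ pq.2)
            = ((Finset.Icc 1 N).filter (d ∣ ·)) ×ˢ ((Finset.Icc 1 N).filter (d ∣ ·)) := by
          rw [Finset.filter_product]
        rw [this, Finset.sum_const, Finset.card_product]
        have hc : ((Finset.Icc 1 N).filter (d ∣ ·)).card = N / d := by
          have : Finset.Icc 1 N = Finset.Ioc 0 N := rfl
          rw [this, Nat.Ioc_filter_dvd_card_eq_div]
        rw [nsmul_eq_mul, Nat.cast_mul, sq, hc]
        ring

lemma moebius_abs_le (n : ℕ) : |(moebius n : ℝ)| ≤ 1 := by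
  have := abs_moebius_le_one (n := n)
  calc |(moebius n : ℝ)| = ((|moebius n| : ℤ) : ℝ) := by push_cast; ring
    _ ≤ 1 := by exact_mod_cast this

lemma moebius_term_bound (n : ℕ) : ‖(moebius n : ℝ) / (n : ℝ) ^ 2‖ ≤ 1 / (n : ℝ) ^ 2 := by
  rcases eq_or_ne n 0 with rfl | hn
  · simp
  · rw [norm_div, Real.norm_eq_abs, Real.norm_eq_abs,
      _root_.abs_of_nonneg (by positivity : (0:ℝ) ≤ (n:ℝ)^2)]
    have h1 : (0:ℝ) < (n:ℝ)^2 := by positivity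
    gcongr
    exact moebius_abs_le n

lemma moebius_summable : Summable (fun n : ℕ => (moebius n : ℝ) / (n : ℝ) ^ 2) :=
  Summable.of_norm_bounded (Real.summable_one_div_nat_pow.mpr one_lt_two) moebius_term_bound

lemma moebius_tsum : ∑' n : ℕ, (moebius n : ℝ) / (n : ℝ) ^ 2 = 6 / Real.pi ^ 2 := by
  have h2 : (1 : ℝ) < (2 : ℂ).re := by norm_num
  have hz := ArithmeticFunction.LSeries_zeta_mul_Lseries_moebius h2
  rw [ArithmeticFunction.LSeries_zeta_eq_riemannZeta h2, riemannZeta_two] at hz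
  have hL : LSeries (fun n => (moebius n : ℂ)) 2
      = ((∑' n : ℕ, (moebius n : ℝ) / (n:ℝ)^2 : ℝ) : ℂ) := by
    rw [Complex.ofReal_tsum]
    unfold LSeries
    congr 1
    ext n
    rcases eq_or_ne n 0 with rfl | hn
    · simp [LSeries.term]
    · rw [LSeries.term_of_ne_zero hn]
      push_cast
      norm_num
  rw [hL] at hz
  have hpi : (Real.pi : ℂ) ≠ 0 := by exact_mod_cast Real.pi_ne_zero
  have hS : ((∑' n : ℕ, (moebius n : ℝ) / (n:ℝ)^2 : ℝ) : ℂ) = ((6 / Real.pi ^ 2 : ℝ) : ℂ) := by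
    rw [Complex.ofReal_div, Complex.ofReal_pow, Complex.ofReal_ofNat]
    field_simp at hz ⊢
    linear_combination hz
  exact_mod_cast hS


lemma harmonic_bound (N : ℕ) (hN : 1 ≤ N) :
    ∑ d ∈ Finset.Icc 1 N, (d:ℝ)⁻¹ ≤ 1 + Real.log N := by
  have h := harmonic_le_one_add_log N
  have he : ∑ d ∈ Finset.Icc 1 N, (d:ℝ)⁻¹ = (harmonic N : ℝ) := by
    rw [harmonic]
    push_cast
    rw [show Finset.Icc 1 N = Finset.Ico 1 (N+1) by rw [Finset.Ico_add_one_right_eq_Icc],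
      Finset.sum_Ico_eq_sum_range]
    simp [add_comm]
  rw [he]; exact h

lemma tail_sq_bound (N : ℕ) (hN : 1 ≤ N) :
    ∑' i : ℕ, (((i + N + 1 : ℕ) : ℝ) ^ 2)⁻¹ ≤ 2 / N := by
  have hsum : Summable (fun i : ℕ => (((i + N + 1 : ℕ) : ℝ) ^ 2)⁻¹) := by
    have := (summable_nat_add_iff (N+1)).mpr
      (Real.summable_one_div_nat_pow.mpr one_lt_two)
    simpa [div_eq_mul_inv, add_assoc] using this
  have : ∑' i : ℕ, (((i + N + 1 : ℕ) : ℝ) ^ 2)⁻¹ ≤ 2 / (N + 1 : ℝ) := by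
    apply Summable.tsum_le_of_sum_le hsum
    intro u
    obtain ⟨M, hM⟩ : ∃ M, u ⊆ Finset.range M := ⟨u.sup _root_.id + 1, fun x hx =>
      Finset.mem_range.mpr (Nat.lt_succ_of_le (Finset.le_sup (f := _root_.id) hx))⟩
    calc ∑ i ∈ u, (((i + N + 1 : ℕ) : ℝ) ^ 2)⁻¹
        ≤ ∑ i ∈ Finset.range M, (((i + N + 1 : ℕ) : ℝ) ^ 2)⁻¹ :=
          Finset.sum_le_sum_of_subset_of_nonneg hM (fun i _ _ => by positivity)
      _ = ∑ d ∈ Finset.Ioo N (N + 1 + M), ((d : ℝ) ^ 2)⁻¹ := by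
          rw [show Finset.Ioo N (N + 1 + M) = Finset.Ico (N+1) (N+1+M) from
            (Finset.Ico_add_one_left_eq_Ioo ..).symm]
          rw [Finset.sum_Ico_eq_sum_range]
          simp only [Nat.add_sub_cancel_left]
          apply Finset.sum_congr rfl
          intro i _
          congr 2
          push_cast; ring
      _ ≤ 2 / ((N:ℝ) + 1) := by
          have := sum_Ioo_inv_sq_le (α := ℝ) N (N + 1 + M)
          simpa using this
  refine this.trans ?_
  apply div_le_div_of_nonneg_left (by norm_num) (by positivity)
  simp

set_option maxHeartbeats 1000000 in
lemma moebius_partial (N : ℕ) (hN : 1 ≤ N) :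
    |∑ d ∈ Finset.Icc 1 N, (moebius d : ℝ) / (d:ℝ)^2 - 6 / Real.pi ^ 2| ≤ 2 / (N:ℝ) := by
  set f : ℕ → ℝ := fun n => (moebius n : ℝ) / (n:ℝ)^2 with hf
  have hpart : ∑ i ∈ Finset.range (N+1), f i = ∑ d ∈ Finset.Icc 1 N, f d := by
    have h0 : Finset.range (N+1) = insert 0 (Finset.Icc 1 N) := by
      ext x; simp only [Finset.mem_range, Finset.mem_insert, Finset.mem_Icc]; omega
    rw [h0, Finset.sum_insert (by simp)]
    simp [hf]
  have hsplit := Summable.sum_add_tsum_nat_add (f := f) (N+1) (moebius_summable : Summable f)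
  rw [moebius_tsum, hpart] at hsplit
  have habs : |∑' i : ℕ, f (i + (N+1))| ≤ 2 / (N:ℝ) := by
    have hs : Summable fun i : ℕ => f (i + (N+1)) :=
      (summable_nat_add_iff (N+1)).mpr moebius_summable
    have hsn : Summable fun i : ℕ => ‖f (i + (N+1))‖ :=
      (summable_nat_add_iff (N+1)).mpr moebius_summable.norm
    have hs2 : Summable (fun i : ℕ => (((i + N + 1 : ℕ) : ℝ) ^ 2)⁻¹) := by
      have := (summable_nat_add_iff (N+1)).mpr
        (Real.summable_one_div_nat_pow.mpr one_lt_two)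
      simpa [div_eq_mul_inv, add_assoc] using this
    calc |∑' i : ℕ, f (i + (N+1))| ≤ ∑' i : ℕ, ‖f (i + (N+1))‖ := by
          simpa using norm_tsum_le_tsum_norm hsn
      _ ≤ ∑' i : ℕ, (((i + N + 1 : ℕ) : ℝ) ^ 2)⁻¹ := by
          apply Summable.tsum_le_tsum _ hsn hs2
          intro i
          have := moebius_term_bound (i + N + 1)
          rw [one_div] at this
          simpa [hf, add_assoc] using this
      _ ≤ 2 / (N:ℝ) := tail_sq_bound N hN
  rw [abs_sub_comm]
  calc |6 / Real.pi ^ 2 - ∑ d ∈ Finset.Icc 1 N, f d|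
      = |∑' i : ℕ, f (i + (N+1))| := by rw [← hsplit]; congr 1; ring
    _ ≤ 2 / (N:ℝ) := habs


lemma term_est (N d : ℕ) (hd1 : 1 ≤ d) (hdN : d ≤ N) :
    |(moebius d : ℝ) * ((N / d : ℕ) : ℝ) ^ 2 - (moebius d : ℝ) * ((N:ℝ)/(d:ℝ))^2|
      ≤ 2 * (N:ℝ) * (d:ℝ)⁻¹ := by
  have hdR : (1:ℝ) ≤ (d:ℝ) := by exact_mod_cast hd1
  have hd0 : (0:ℝ) < (d:ℝ) := by linarith
  have hba : ((N / d : ℕ) : ℝ) ≤ (N:ℝ)/(d:ℝ) := Nat.cast_div_le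
  have hab : (N:ℝ)/(d:ℝ) ≤ ((N / d : ℕ) : ℝ) + 1 := by
    have h := Nat.lt_mul_div_succ N (show 0 < d by omega)
    have h2 : (N:ℝ) < (d:ℝ) * (((N / d : ℕ) : ℝ) + 1) := by exact_mod_cast h
    rw [div_le_iff₀ hd0]
    nlinarith
  have hb0 : (0:ℝ) ≤ ((N / d : ℕ) : ℝ) := Nat.cast_nonneg _
  have hmu : |(moebius d : ℝ)| ≤ 1 := moebius_abs_le d
  have haeq : (N:ℝ)/(d:ℝ) = (N:ℝ) * (d:ℝ)⁻¹ := div_eq_mul_inv _ _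
  have habs : |(moebius d : ℝ) * ((N / d : ℕ) : ℝ) ^ 2 - (moebius d : ℝ) * ((N:ℝ)/(d:ℝ))^2|
      = |(moebius d : ℝ)| * |((N / d : ℕ) : ℝ) ^ 2 - ((N:ℝ)/(d:ℝ))^2| := by
    rw [← mul_sub, abs_mul]
  have hd2 : |((N / d : ℕ) : ℝ) ^ 2 - ((N:ℝ)/(d:ℝ))^2|
      = ((N:ℝ)/(d:ℝ))^2 - ((N / d : ℕ) : ℝ) ^ 2 := by
    rw [abs_sub_comm]
    exact abs_of_nonneg (by nlinarith)
  rw [habs, hd2]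
  calc |(moebius d : ℝ)| * (((N:ℝ)/(d:ℝ))^2 - ((N / d : ℕ) : ℝ) ^ 2)
      ≤ 1 * (((N:ℝ)/(d:ℝ))^2 - ((N / d : ℕ) : ℝ) ^ 2) :=
        mul_le_mul_of_nonneg_right hmu (by nlinarith)
    _ ≤ 2 * (N:ℝ) * (d:ℝ)⁻¹ := by rw [one_mul]; nlinarith

lemma sum_est (N : ℕ) (hN : 1 ≤ N) :
    |((∑ d ∈ Finset.Icc 1 N, (moebius d) * ((N / d : ℕ) : ℤ) ^ 2 : ℤ) : ℝ)
       - 6 / Real.pi ^ 2 * (N:ℝ) ^ 2| ≤ 2 * N * Real.log N + 4 * N := by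
  have hNR : (1:ℝ) ≤ (N:ℝ) := by exact_mod_cast hN
  have hcast : ((∑ d ∈ Finset.Icc 1 N, (moebius d) * ((N / d : ℕ) : ℤ) ^ 2 : ℤ) : ℝ)
      = ∑ d ∈ Finset.Icc 1 N, (moebius d : ℝ) * ((N / d : ℕ) : ℝ) ^ 2 := by
    push_cast; rfl
  have hA : True := trivial
  have h1 : |∑ d ∈ Finset.Icc 1 N, (moebius d : ℝ) * ((N / d : ℕ) : ℝ) ^ 2
        - ∑ d ∈ Finset.Icc 1 N, (moebius d : ℝ) * ((N:ℝ)/(d:ℝ))^2|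
      ≤ 2 * (N:ℝ) * (1 + Real.log N) := by
    rw [← Finset.sum_sub_distrib]
    calc |∑ d ∈ Finset.Icc 1 N, ((moebius d : ℝ) * ((N / d : ℕ) : ℝ) ^ 2
            - (moebius d : ℝ) * ((N:ℝ)/(d:ℝ))^2)|
        ≤ ∑ d ∈ Finset.Icc 1 N, |(moebius d : ℝ) * ((N / d : ℕ) : ℝ) ^ 2
            - (moebius d : ℝ) * ((N:ℝ)/(d:ℝ))^2| := Finset.abs_sum_le_sum_abs _ _
      _ ≤ ∑ d ∈ Finset.Icc 1 N, 2 * (N:ℝ) * (d:ℝ)⁻¹ := by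
          apply Finset.sum_le_sum
          intro d hd
          rw [Finset.mem_Icc] at hd
          exact term_est N d hd.1 hd.2
      _ = 2 * (N:ℝ) * ∑ d ∈ Finset.Icc 1 N, (d:ℝ)⁻¹ := by rw [Finset.mul_sum]
      _ ≤ 2 * (N:ℝ) * (1 + Real.log N) := by
          apply mul_le_mul_of_nonneg_left (harmonic_bound N hN) (by positivity)
  have h2 : |(∑ d ∈ Finset.Icc 1 N, (moebius d : ℝ) * ((N:ℝ)/(d:ℝ))^2)
      - 6 / Real.pi ^ 2 * (N:ℝ)^2| ≤ 2 * (N:ℝ) := by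
    have hAeq : (∑ d ∈ Finset.Icc 1 N, (moebius d : ℝ) * ((N:ℝ)/(d:ℝ))^2)
        = (N:ℝ)^2 * ∑ d ∈ Finset.Icc 1 N, (moebius d : ℝ) / (d:ℝ)^2 := by
      rw [Finset.mul_sum]
      apply Finset.sum_congr rfl
      intro d _
      rw [div_pow]
      ring
    rw [hAeq, show (N:ℝ)^2 * (∑ d ∈ Finset.Icc 1 N, (moebius d : ℝ) / (d:ℝ)^2)
        - 6 / Real.pi ^ 2 * (N:ℝ)^2
        = (N:ℝ)^2 * ((∑ d ∈ Finset.Icc 1 N, (moebius d : ℝ) / (d:ℝ)^2) - 6 / Real.pi^2) by ring,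
      abs_mul, abs_of_nonneg (by positivity : (0:ℝ) ≤ (N:ℝ)^2)]
    calc (N:ℝ)^2 * |∑ d ∈ Finset.Icc 1 N, (moebius d : ℝ) / (d:ℝ)^2 - 6 / Real.pi^2|
        ≤ (N:ℝ)^2 * (2 / N) := by
          apply mul_le_mul_of_nonneg_left (moebius_partial N hN) (by positivity)
      _ = 2 * (N:ℝ) := by field_simp
  rw [hcast]
  have hlog : 0 ≤ Real.log N := Real.log_nonneg hNR
  calc |∑ d ∈ Finset.Icc 1 N, (moebius d : ℝ) * ((N / d : ℕ) : ℝ) ^ 2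
        - 6 / Real.pi ^ 2 * (N:ℝ) ^ 2|
      ≤ |∑ d ∈ Finset.Icc 1 N, (moebius d : ℝ) * ((N / d : ℕ) : ℝ) ^ 2
          - ∑ d ∈ Finset.Icc 1 N, (moebius d : ℝ) * ((N:ℝ)/(d:ℝ))^2|
        + |(∑ d ∈ Finset.Icc 1 N, (moebius d : ℝ) * ((N:ℝ)/(d:ℝ))^2)
          - 6 / Real.pi ^ 2 * (N:ℝ)^2| := abs_sub_le _ _ _
    _ ≤ 2 * (N:ℝ) * (1 + Real.log N) + 2 * (N:ℝ) := add_le_add h1 h2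
    _ = 2 * N * Real.log N + 4 * N := by ring

theorem coprime_pairs_count_asymptotic :
    ∃ C : ℝ, 0 < C ∧ ∃ X₀ : ℝ, ∀ X : ℝ, X₀ ≤ X →
      |((((Finset.Icc 1 ⌊X⌋₊) ×ˢ (Finset.Icc 1 ⌊X⌋₊)).filter
            (fun pq => Nat.gcd pq.1 pq.2 = 1)).card : ℝ)
          - (6 / Real.pi ^ 2) * X ^ 2|
        ≤ C * X * Real.log X := by
  refine ⟨8, by norm_num, 3, fun X hX => ?_⟩
  set N : ℕ := ⌊X⌋₊ with hNdef
  have hX0 : (0:ℝ) < X := by linarith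
  have hX1 : (1:ℝ) ≤ X := by linarith
  have hN1 : 1 ≤ N := Nat.le_floor (by exact_mod_cast hX1)
  have hNX : (N:ℝ) ≤ X := Nat.floor_le hX0.le
  have hXN : X < (N:ℝ) + 1 := Nat.lt_floor_add_one X
  have hNR : (1:ℝ) ≤ (N:ℝ) := by exact_mod_cast hN1
  have hlogX : 1 ≤ Real.log X := by
    have he : Real.exp 1 ≤ X := by
      have := Real.exp_one_lt_d9
      linarith
    calc (1:ℝ) = Real.log (Real.exp 1) := (Real.log_exp 1).symm
      _ ≤ Real.log X := Real.log_le_log (Real.exp_pos 1) he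
  have hlogN : Real.log N ≤ Real.log X := Real.log_le_log (by linarith) hNX
  have hlogN0 : 0 ≤ Real.log N := Real.log_nonneg hNR
  have hcard : ((((Finset.Icc 1 N) ×ˢ (Finset.Icc 1 N)).filter
        (fun pq => Nat.gcd pq.1 pq.2 = 1)).card : ℝ)
      = ((∑ d ∈ Finset.Icc 1 N, (moebius d) * ((N / d : ℕ) : ℤ) ^ 2 : ℤ) : ℝ) := by
    exact_mod_cast congrArg (fun z : ℤ => (z : ℝ)) (cp_ident N)
  rw [hcard]
  have h1 := sum_est N hN1
  have hpi2 : 6 / Real.pi ^ 2 ≤ 1 := by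
    have hpi := Real.pi_gt_three
    rw [div_le_one (by positivity)]
    nlinarith
  have h2 : |6 / Real.pi ^ 2 * (N:ℝ)^2 - 6 / Real.pi ^ 2 * X^2| ≤ 2 * X := by
    rw [← mul_sub, abs_mul, abs_of_nonneg (by positivity : (0:ℝ) ≤ 6 / Real.pi ^ 2),
      abs_sub_comm, abs_of_nonneg (by nlinarith : (0:ℝ) ≤ X^2 - (N:ℝ)^2)]
    calc 6 / Real.pi ^ 2 * (X^2 - (N:ℝ)^2) ≤ 1 * (X^2 - (N:ℝ)^2) :=
          mul_le_mul_of_nonneg_right hpi2 (by nlinarith)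
      _ ≤ 2 * X := by nlinarith
  calc |((∑ d ∈ Finset.Icc 1 N, (moebius d) * ((N / d : ℕ) : ℤ) ^ 2 : ℤ) : ℝ)
        - 6 / Real.pi ^ 2 * X ^ 2|
      ≤ |((∑ d ∈ Finset.Icc 1 N, (moebius d) * ((N / d : ℕ) : ℤ) ^ 2 : ℤ) : ℝ)
          - 6 / Real.pi ^ 2 * (N:ℝ) ^ 2|
        + |6 / Real.pi ^ 2 * (N:ℝ)^2 - 6 / Real.pi ^ 2 * X^2| := abs_sub_le _ _ _
    _ ≤ (2 * (N:ℝ) * Real.log N + 4 * (N:ℝ)) + 2 * X := add_le_add h1 h2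
    _ ≤ (2 * X * Real.log X + 4 * X) + 2 * X := by
        have : 2 * (N:ℝ) * Real.log N ≤ 2 * X * Real.log X := by
          apply mul_le_mul (by linarith) hlogN hlogN0 (by linarith)
        linarith
    _ ≤ 8 * X * Real.log X := by nlinarith
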